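/- For all l ∈ [0, π_2/2], the derivative of sleaf_2 satisfies sleaf_2'(l) = √(1 - sleaf_2(l)⁴). -/

import Mathlib

open MeasureTheory intervalIntegral Set

noncomputable def sfea (t : ℝ) : ℝ := 1 / Real.sqrt (1 - t ^ 4)
noncomputable def SFea (x : ℝ) : ℝ := ∫ t in (0:ℝ)..x, sfea t

lemma sfea_meas : Measurable sfea := by
  unfold sfea; fun_prop

lemma sfea_nonneg (t : ℝ) : 0 ≤ sfea t := by
  unfold sfea; positivity

lemma sfea_pos {t : ℝ} (h : t ^ 4 < 1) : 0 < sfea t := by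
  unfold sfea
  have : 0 < Real.sqrt (1 - t ^ 4) := Real.sqrt_pos.2 (by linarith)
  positivity

lemma sfea_contAt {r : ℝ} (h : r ^ 4 < 1) : ContinuousAt sfea r := by
  have h1 : 0 < Real.sqrt (1 - r ^ 4) := Real.sqrt_pos.2 (by linarith)
  unfold sfea
  exact continuousAt_const.div
    (Real.continuous_sqrt.continuousAt.comp (by fun_prop)) (ne_of_gt h1)

lemma sfea_le {t : ℝ} (h0 : 0 ≤ t) (h1 : t ≤ 1) : sfea t ≤ (1 - t) ^ (-(1/2) : ℝ) := by
  rcases eq_or_lt_of_le h1 with rfl | h1'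
  · simp [sfea, Real.zero_rpow]
  · have hu : (0:ℝ) < 1 - t := by linarith
    have ht4 : t ^ 4 ≤ t := by
      calc t ^ 4 ≤ t ^ 1 := pow_le_pow_of_le_one h0 h1 (by norm_num)
      _ = t := pow_one t
    have hsq : Real.sqrt (1 - t) ≤ Real.sqrt (1 - t ^ 4) := Real.sqrt_le_sqrt (by linarith)
    have hp : 0 < Real.sqrt (1 - t) := Real.sqrt_pos.2 hu
    rw [Real.rpow_neg hu.le, ← Real.sqrt_eq_rpow, ← one_div]
    exact one_div_le_one_div_of_le hp hsq

lemma sfea_ge {t : ℝ} (h0 : 0 ≤ t) (h1 : t ≤ 1) : (1/2) * (1 - t) ^ (-(1/2) : ℝ) ≤ sfea t := by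
  rcases eq_or_lt_of_le h1 with rfl | h1'
  · simp [sfea, Real.zero_rpow]
  · have hu : (0:ℝ) < 1 - t := by linarith
    have ht2 : t ^ 2 ≤ 1 := pow_le_one₀ h0 h1
    have ht3 : t ^ 3 ≤ 1 := pow_le_one₀ h0 h1
    have h4 : 1 - t ^ 4 ≤ 4 * (1 - t) := by nlinarith [mul_le_mul_of_nonneg_left (show 1 + t + t ^ 2 + t ^ 3 ≤ 4 by linarith) hu.le]
    have h4' : (0:ℝ) < 1 - t ^ 4 := by nlinarith [pow_lt_one₀ h0 h1' (show 4 ≠ 0 by norm_num)]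
    have hs4 : Real.sqrt (1 - t ^ 4) ≤ 2 * Real.sqrt (1 - t) := by
      have : Real.sqrt (1 - t ^ 4) ≤ Real.sqrt (4 * (1 - t)) := Real.sqrt_le_sqrt h4
      rwa [show (4:ℝ) * (1 - t) = 2 ^ 2 * (1 - t) by norm_num, Real.sqrt_mul (by positivity),
        Real.sqrt_sq (by norm_num : (0:ℝ) ≤ 2)] at this
    have hp : 0 < Real.sqrt (1 - t ^ 4) := Real.sqrt_pos.2 h4'
    have hp2 : 0 < Real.sqrt (1 - t) := Real.sqrt_pos.2 hu
    rw [Real.rpow_neg hu.le, ← Real.sqrt_eq_rpow]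
    rw [show (1:ℝ)/2 * (Real.sqrt (1 - t))⁻¹ = 1 / (2 * Real.sqrt (1 - t)) by
      field_simp]
    unfold sfea
    exact one_div_le_one_div_of_le hp hs4

lemma gea_int (r : ℝ) : IntervalIntegrable (fun t : ℝ => (1 - t) ^ (-(1/2) : ℝ)) volume r 1 := by
  have h := (intervalIntegrable_rpow' (show (-1:ℝ) < -(1/2) by norm_num)
    (a := 0) (b := 1 - r)).comp_sub_left 1
  simpa using h.symm

lemma sfea_int01 : IntervalIntegrable sfea volume 0 1 := by
  refine (gea_int 0).mono_fun sfea_meas.aestronglyMeasurable ?_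
  refine ae_restrict_of_forall_mem measurableSet_uIoc ?_
  intro t ht
  rw [Set.uIoc_of_le (by norm_num : (0:ℝ) ≤ 1)] at ht
  have h1 := sfea_le ht.1.le ht.2
  have h2 : (0:ℝ) ≤ (1 - t) ^ (-(1/2) : ℝ) := Real.rpow_nonneg (by linarith [ht.2]) _
  simp only [Real.norm_eq_abs, abs_of_nonneg (sfea_nonneg t), abs_of_nonneg h2]
  exact h1

lemma sfea_int {a b : ℝ} (ha : a ∈ Set.Icc (0:ℝ) 1) (hb : b ∈ Set.Icc (0:ℝ) 1) :
    IntervalIntegrable sfea volume a b := by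
  refine sfea_int01.mono_set ?_
  rw [Set.uIcc_of_le (by norm_num : (0:ℝ) ≤ 1)]
  exact Set.uIcc_subset_Icc ha hb

lemma SFea_strict : StrictMonoOn SFea (Set.Icc 0 1) := by
  intro a ha b hb hab
  have hI : SFea a + ∫ t in a..b, sfea t = SFea b :=
    integral_add_adjacent_intervals (sfea_int (Set.left_mem_Icc.2 zero_le_one) ha)
      (sfea_int ha hb)
  have hpos : 0 < ∫ t in a..b, sfea t := by
    refine intervalIntegral_pos_of_pos_on (sfea_int ha hb) ?_ hab
    intro x hx
    exact sfea_pos (by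
      have h0 : 0 ≤ x := le_trans ha.1 hx.1.le
      have : x < 1 := lt_of_lt_of_le hx.2 hb.2
      exact pow_lt_one₀ h0 this (by norm_num))
  linarith

lemma SFea_key {r : ℝ} (hr : r ∈ Set.Icc (0:ℝ) 1) :
    Real.sqrt (1 - r) ≤ ∫ t in r..1, sfea t := by
  have hint : (∫ t in r..1, (fun t : ℝ => (1 - t) ^ (-(1/2) : ℝ)) t) = 2 * Real.sqrt (1 - r) := by
    have h := intervalIntegral.integral_comp_sub_left (fun x : ℝ => x ^ (-(1/2) : ℝ)) 1
      (a := r) (b := 1)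
    rw [show (1:ℝ) - 1 = 0 by norm_num] at h
    rw [h, integral_rpow (Or.inl (by norm_num : (-1:ℝ) < -(1/2)))]
    rw [show (-(1/2) : ℝ) + 1 = 1/2 by norm_num, Real.zero_rpow (by norm_num), ← Real.sqrt_eq_rpow]
    ring
  have hmono : (∫ t in r..1, (1/2) * (1 - t) ^ (-(1/2) : ℝ)) ≤ ∫ t in r..1, sfea t := by
    refine integral_mono_on hr.2 ((gea_int r).const_mul _) (sfea_int hr (Set.right_mem_Icc.2 zero_le_one)) ?_
    intro t ht
    exact sfea_ge (le_trans hr.1 ht.1) ht.2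
  rw [intervalIntegral.integral_const_mul, hint] at hmono
  linarith

lemma SFea_odd (x : ℝ) : SFea (-x) = -SFea x := by
  have heven : ∀ t : ℝ, sfea (-t) = sfea t := by
    intro t; unfold sfea; rw [show (-t) ^ 4 = t ^ 4 by ring]
  have h : (∫ t in (0:ℝ)..x, sfea (-t)) = ∫ t in (-x)..(0:ℝ), sfea t := by
    simpa using intervalIntegral.integral_comp_neg (fun t => sfea t) (a := 0) (b := x)
  simp only [heven] at h
  unfold SFea
  rw [intervalIntegral.integral_symm, ← h]

lemma SFea_hasDeriv {r : ℝ} (h : r ^ 4 < 1) : HasDerivAt SFea (sfea r) r := by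
  have h1 : |r| < 1 := by
    by_contra hc
    push_neg at hc
    have : (1:ℝ) ≤ |r| ^ 4 := one_le_pow₀ hc
    rw [← abs_pow, abs_of_nonneg (by positivity : (0:ℝ) ≤ r ^ 4)] at this
    linarith
  have hint : IntervalIntegrable sfea volume 0 r := by
    rcases abs_lt.1 h1 with ⟨hl, hr'⟩
    rcases le_total 0 r with h'|h'
    · exact sfea_int (Set.left_mem_Icc.2 zero_le_one) ⟨h', hr'.le⟩
    · refine ContinuousOn.intervalIntegrable ?_
      intro x hx
      rw [Set.uIcc_of_ge h'] at hx
      have hax : |x| < 1 := abs_lt.2 ⟨by linarith [hx.1], by linarith [hx.2]⟩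
      have hx4 : x ^ 4 < 1 := by
        calc x ^ 4 = |x| ^ 4 := by rw [← abs_pow, abs_of_nonneg (by positivity)]
        _ < 1 := pow_lt_one₀ (abs_nonneg x) hax (by norm_num)
      exact (sfea_contAt hx4).continuousWithinAt
  exact intervalIntegral.integral_hasDerivAt_right hint
    ⟨Set.univ, Filter.univ_mem, sfea_meas.aestronglyMeasurable⟩ (sfea_contAt h)

theorem sleaf_deriv (π₂ : ℝ) (hπ : π₂ = 2 * ∫ t in (0:ℝ)..1, 1 / Real.sqrt (1 - t ^ 4))
    (sleaf : ℝ → ℝ)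
    (hs : ∀ l ∈ Set.Icc 0 (π₂ / 2), sleaf l ∈ Set.Icc (0:ℝ) 1 ∧
      (∫ t in (0:ℝ)..(sleaf l), 1 / Real.sqrt (1 - t ^ 4)) = l) :
    ∀ l ∈ Set.Icc 0 (π₂ / 2),
      derivWithin sleaf (Set.Icc 0 (π₂ / 2)) l = Real.sqrt (1 - (sleaf l) ^ 4) := by
  have hS1 : π₂ / 2 = SFea 1 := by rw [hπ]; unfold SFea sfea; ring
  have hSF0 : SFea 0 = 0 := intervalIntegral.integral_same
  have hmonoF := SFea_strict
  have hmonoF' := SFea_strict.monotoneOn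
  have h01 : (0:ℝ) ∈ Set.Icc (0:ℝ) 1 := Set.left_mem_Icc.2 zero_le_one
  have h11 : (1:ℝ) ∈ Set.Icc (0:ℝ) 1 := Set.right_mem_Icc.2 zero_le_one
  have hπpos : 0 < π₂ / 2 := by
    rw [hS1, ← hSF0]; exact hmonoF h01 h11 zero_lt_one
  have hsv : ∀ l ∈ Set.Icc 0 (π₂ / 2), sleaf l ∈ Set.Icc (0:ℝ) 1 ∧ SFea (sleaf l) = l := by
    intro l hl
    exact ⟨(hs l hl).1, by unfold SFea sfea; exact (hs l hl).2⟩
  have hmapsF : ∀ r ∈ Set.Icc (0:ℝ) 1, SFea r ∈ Set.Icc 0 (π₂ / 2) := by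
    intro r hr
    exact ⟨by rw [← hSF0]; exact hmonoF' h01 hr hr.1, by rw [hS1]; exact hmonoF' hr h11 hr.2⟩
  have hinv : ∀ r ∈ Set.Icc (0:ℝ) 1, sleaf (SFea r) = r := by
    intro r hr
    exact hmonoF.injOn (hsv _ (hmapsF r hr)).1 hr ((hsv _ (hmapsF r hr)).2)
  have s0 : sleaf 0 = 0 := by have := hinv 0 h01; rwa [hSF0] at this
  have s1 : sleaf (π₂ / 2) = 1 := by have := hinv 1 h11; rwa [← hS1] at this
  have hsm : StrictMonoOn sleaf (Set.Icc 0 (π₂ / 2)) := by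
    intro a ha b hb hab
    by_contra hc
    push_neg at hc
    have := hmonoF' (hsv b hb).1 (hsv a ha).1 hc
    rw [(hsv a ha).2, (hsv b hb).2] at this
    exact absurd this (not_le.2 hab)
  -- right continuity
  have hcr : ∀ a ∈ Set.Ico 0 (π₂ / 2), ContinuousWithinAt sleaf (Set.Ici a) a := by
    intro a ha
    have haS : a ∈ Set.Icc 0 (π₂ / 2) := ⟨ha.1, ha.2.le⟩
    refine hsm.continuousWithinAt_right_of_exists_between (Icc_mem_nhdsGE_of_mem ha) ?_
    intro b hb
    have hsa1 : sleaf a < 1 := by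
      rw [← s1]
      exact hsm haS (Set.right_mem_Icc.2 hπpos.le) ha.2
    obtain ⟨r', hr1, hr2⟩ := exists_between (lt_min hb hsa1)
    have hr'mem : r' ∈ Set.Icc (0:ℝ) 1 :=
      ⟨le_trans (hsv a haS).1.1 hr1.le, (lt_of_lt_of_le hr2 (min_le_right _ _)).le⟩
    refine ⟨SFea r', hmapsF r' hr'mem, ?_⟩
    rw [hinv r' hr'mem]
    exact ⟨hr1, (lt_of_lt_of_le hr2 (min_le_left _ _)).le⟩
  -- left continuity
  have hcl : ∀ a ∈ Set.Ioc 0 (π₂ / 2), ContinuousWithinAt sleaf (Set.Iic a) a := by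
    intro a ha
    have haS : a ∈ Set.Icc 0 (π₂ / 2) := ⟨ha.1.le, ha.2⟩
    refine hsm.continuousWithinAt_left_of_exists_between (Icc_mem_nhdsLE_of_mem ⟨ha.1, ha.2⟩) ?_
    intro b hb
    have hsa0 : 0 < sleaf a := by
      rw [← s0]
      exact hsm (Set.left_mem_Icc.2 hπpos.le) haS ha.1
    set r' := max b 0 with hr'
    have hr'lt : r' < sleaf a := max_lt hb hsa0
    have hr'mem : r' ∈ Set.Icc (0:ℝ) 1 :=
      ⟨le_max_right _ _, le_trans hr'lt.le (hsv a haS).1.2⟩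
    refine ⟨SFea r', hmapsF r' hr'mem, ?_⟩
    rw [hinv r' hr'mem]
    exact ⟨le_max_left _ _, hr'lt⟩
  intro l hl
  rcases eq_or_lt_of_le hl.2 with hlL | hlL
  · -- l = π₂ / 2
    subst hlL
    have hD : HasDerivWithinAt sleaf 0 (Set.Icc 0 (π₂ / 2)) (π₂ / 2) := by
      rw [hasDerivWithinAt_iff_tendsto_slope]
      have hsub : Set.Icc 0 (π₂ / 2) \ {π₂ / 2} ⊆ Set.Iic (π₂ / 2) :=
        fun y hy => hy.1.2
      have htends : Filter.Tendsto (fun y => Real.sqrt (1 - sleaf y))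
          (nhdsWithin (π₂/2) (Set.Icc 0 (π₂ / 2) \ {π₂ / 2})) (nhds 0) := by
        have h1 : Filter.Tendsto sleaf (nhdsWithin (π₂/2) (Set.Icc 0 (π₂ / 2) \ {π₂ / 2}))
            (nhds 1) := by
          have := (hcl (π₂/2) (Set.right_mem_Ioc.2 hπpos)).mono hsub
          rwa [ContinuousWithinAt, s1] at this
        have h2 : Filter.Tendsto (fun r : ℝ => Real.sqrt (1 - r)) (nhds 1) (nhds 0) := by
          have : ContinuousAt (fun r : ℝ => Real.sqrt (1 - r)) 1 :=
            (Real.continuous_sqrt.comp (continuous_const.sub continuous_id)).continuousAt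
          have h3 := this.tendsto
          simpa using h3
        exact h2.comp h1
      refine tendsto_of_tendsto_of_tendsto_of_le_of_le' tendsto_const_nhds htends ?_ ?_
      · filter_upwards [self_mem_nhdsWithin] with y hy
        have hyS : y ∈ Set.Icc 0 (π₂ / 2) := hy.1
        have hylt : y < π₂ / 2 := lt_of_le_of_ne hyS.2 (fun h => hy.2 h)
        have hr := (hsv y hyS).1
        rw [slope_def_field, s1]
        have h1 : sleaf y - 1 ≤ 0 := by linarith [hr.2]
        have h2 : y - π₂ / 2 < 0 := by linarith
        rw [show (sleaf y - 1) / (y - π₂ / 2) = (1 - sleaf y) / (π₂ / 2 - y) by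
          rw [← neg_div_neg_eq]; ring_nf]
        exact div_nonneg (by linarith) (by linarith)
      · filter_upwards [self_mem_nhdsWithin] with y hy
        have hyS : y ∈ Set.Icc 0 (π₂ / 2) := hy.1
        have hylt : y < π₂ / 2 := lt_of_le_of_ne hyS.2 (fun h => hy.2 h)
        have hr := (hsv y hyS).1
        have hkey : Real.sqrt (1 - sleaf y) ≤ π₂ / 2 - y := by
          have hadd : SFea (sleaf y) + (∫ t in (sleaf y)..1, sfea t) = SFea 1 :=
            intervalIntegral.integral_add_adjacent_intervals (sfea_int h01 hr) (sfea_int hr h11)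
          have := SFea_key hr
          rw [(hsv y hyS).2] at hadd
          rw [← hS1] at hadd
          linarith
        have hLy : 0 < π₂ / 2 - y := by linarith
        rw [slope_def_field, s1]
        have heq : (sleaf y - 1) / (y - π₂ / 2) = (1 - sleaf y) / (π₂ / 2 - y) := by
          rw [← neg_div_neg_eq]; ring_nf
        rw [heq]
        rw [div_le_iff₀ hLy]
        have hsq : 1 - sleaf y = Real.sqrt (1 - sleaf y) * Real.sqrt (1 - sleaf y) :=
          (Real.mul_self_sqrt (by linarith [hr.2])).symm
        calc (1 - sleaf y) = Real.sqrt (1 - sleaf y) * Real.sqrt (1 - sleaf y) := hsq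
          _ ≤ Real.sqrt (1 - sleaf y) * (π₂ / 2 - y) :=
            mul_le_mul_of_nonneg_left hkey (Real.sqrt_nonneg _)
    rw [hD.derivWithin ((uniqueDiffOn_Icc hπpos) _ hl), s1]
    norm_num
  · rcases eq_or_lt_of_le hl.1 with hl0 | hl0
    · -- l = 0
      subst hl0
      set g : ℝ → ℝ := fun y => if y < 0 then -sleaf (-y) else sleaf y with hgdef
      have hgeq : ∀ y : ℝ, 0 ≤ y → g y = sleaf y := fun y hy => if_neg (not_lt.2 hy)
      have hg0 : g 0 = 0 := by rw [hgeq 0 le_rfl, s0]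
      have hcg : ContinuousAt g 0 := by
        rw [continuousAt_iff_continuous_left_right]
        constructor
        · have hbase : ContinuousWithinAt sleaf (Set.Ici 0) ((fun y : ℝ => -y) 0) := by
            simpa using hcr 0 ⟨le_rfl, hπpos⟩
          have h2 : ContinuousWithinAt (fun y : ℝ => sleaf (-y)) (Set.Iic 0) 0 :=
            hbase.comp (continuous_neg.continuousWithinAt) (fun y hy => Set.mem_Ici.2 (neg_nonneg.2 hy))
          refine h2.neg.congr ?_ ?_
          · intro y hy
            rcases lt_or_eq_of_le (Set.mem_Iic.1 hy) with h | h
            · exact if_pos h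
            · subst h; simp [hg0, s0]
          · simp [hg0, s0]
        · exact (hcr 0 ⟨le_rfl, hπpos⟩).congr (fun y hy => hgeq y hy) (hgeq 0 le_rfl)
      have hfg : ∀ᶠ y in nhds 0, SFea (g y) = y := by
        filter_upwards [Ioo_mem_nhds (by linarith : -(π₂/2) < (0:ℝ)) hπpos] with y hy
        rcases lt_or_ge y 0 with h | h
        · have hyS : -y ∈ Set.Icc 0 (π₂/2) := ⟨by linarith, by linarith [hy.1]⟩
          have hgy : g y = -sleaf (-y) := if_pos h
          rw [hgy, SFea_odd, (hsv _ hyS).2, neg_neg]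
        · have hyS : y ∈ Set.Icc 0 (π₂/2) := ⟨h, hy.2.le⟩
          rw [hgeq y h, (hsv _ hyS).2]
      have hFd : HasDerivAt SFea (sfea (g 0)) (g 0) := by
        rw [hg0]; exact SFea_hasDeriv (by norm_num)
      have hne : sfea (g 0) ≠ 0 := by rw [hg0]; exact (sfea_pos (by norm_num)).ne'
      have hD : HasDerivAt g (sfea (g 0))⁻¹ 0 :=
        HasDerivAt.of_local_left_inverse hcg hFd hne hfg
      have hDW : HasDerivWithinAt sleaf (sfea (g 0))⁻¹ (Set.Icc 0 (π₂/2)) 0 :=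
        (hD.hasDerivWithinAt).congr (fun y hy => (hgeq y hy.1).symm) ((hgeq 0 le_rfl).symm)
      rw [hDW.derivWithin ((uniqueDiffOn_Icc hπpos) _ hl), hg0, s0]
      unfold sfea
      norm_num
    · -- interior
      have hr := (hsv l hl).1
      have hrlt : sleaf l < 1 := by
        rw [← s1]; exact hsm hl (Set.right_mem_Icc.2 hπpos.le) hlL
      have hr4 : (sleaf l) ^ 4 < 1 := pow_lt_one₀ hr.1 hrlt (by norm_num)
      have hca : ContinuousAt sleaf l :=
        continuousAt_iff_continuous_left_right.2
          ⟨hcl l ⟨hl0, hl.2⟩, hcr l ⟨hl.1, hlL⟩⟩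
      have hfg : ∀ᶠ y in nhds l, SFea (sleaf y) = y := by
        filter_upwards [Icc_mem_nhds hl0 hlL] with y hy using (hsv y hy).2
      have hD : HasDerivAt sleaf (sfea (sleaf l))⁻¹ l :=
        HasDerivAt.of_local_left_inverse hca (SFea_hasDeriv hr4) (sfea_pos hr4).ne' hfg
      have hval : (sfea (sleaf l))⁻¹ = Real.sqrt (1 - (sleaf l) ^ 4) := by
        unfold sfea; rw [one_div, inv_inv]
      rw [(hD.hasDerivWithinAt.derivWithin ((uniqueDiffOn_Icc hπpos) _ hl)), hval]
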